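/- For every n ≥ 1, the assignment x · I_w = (−1)^{inv_w(x)} I_{x w x⁻¹} if dom(w) ⊆ dom(x), and x · I_w = 0 otherwise (for x ∈ ISₙ and w an involution in ISₙ), defines a monoid homomorphism from ISₙ to the multiplicative monoid of End_ℂ(V): the identity of ISₙ acts as the identity of V, and (xy) · I_w = x · (y · I_w) for all x, y ∈ ISₙ and all involutions w. -/

import Mathlib

open Equiv

/-- The symmetric inverse semigroup `ISₙ`: partial injective maps of `{0, …, n−1}`
(modelled as partial equivalences `Fin n ≃. Fin n`), under composition of partial
maps: `(x * y)(a) = x(y(a))`. -/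
abbrev ISn (n : ℕ) : Type := PEquiv (Fin n) (Fin n)

noncomputable instance ISnMonoid (n : ℕ) : Monoid (ISn n) where
  one := PEquiv.refl (Fin n)
  mul x y := y.trans x
  mul_assoc x y z := (PEquiv.trans_assoc z y x).symm
  one_mul x := PEquiv.trans_refl x
  mul_one x := PEquiv.refl_trans x

@[simp] theorem ISn.mul_def {n : ℕ} (x y : ISn n) : x * y = y.trans x := rfl
@[simp] theorem ISn.one_def {n : ℕ} : (1 : ISn n) = PEquiv.refl (Fin n) := rfl

/-- Involutions in `ISₙ`: elements mapping their domain bijectively to itself with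
`w(w(a)) = a` for all `a` in the domain; equivalently, `w.symm = w`. -/
abbrev ISInv (n : ℕ) : Type := {w : ISn n // w.symm = w}

/-- `V`: the complex vector space with basis `{I_w : w an involution in ISₙ}`. -/
abbrev VIS (n : ℕ) : Type := ISInv n →₀ ℂ

/-- Conjugation `x w x⁻¹` of an involution `w ∈ ISₙ` by an element `x ∈ ISₙ`
(as a partial map, `a ↦ x(w(x⁻¹(a)))`; when `dom(w) ⊆ dom(x)` this is the involution
with domain `x(dom(w))` sending `x(a) ↦ x(w(a))` for `a ∈ dom(w)`). -/
def conjIS {n : ℕ} (x : ISn n) (w : ISInv n) : ISInv n :=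
  ⟨(x.symm.trans w.1).trans x, by
    rw [PEquiv.symm_trans_rev, PEquiv.symm_trans_rev, PEquiv.symm_symm, w.2,
      PEquiv.trans_assoc]⟩

/-- Conjugation `π w π⁻¹` of an involution `w ∈ ISₙ` by a permutation `π ∈ Sₙ`:
the involution with domain `π(dom(w))` sending `π(a) ↦ π(w(a))` for `a ∈ dom(w)`. -/
def conjPermIS {n : ℕ} (π : Equiv.Perm (Fin n)) (w : ISInv n) : ISInv n :=
  conjIS π.toPEquiv w

/-- `inv_w(x) = |{(a,b) : a < b, w(a) = b, x(a) > x(b)}|`. -/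
noncomputable def invIS {n : ℕ} (w : ISInv n) (x : ISn n) : ℕ :=
  {p : Fin n × Fin n | p.1 < p.2 ∧ w.1 p.1 = some p.2 ∧
    ∃ u v : Fin n, x p.1 = some u ∧ x p.2 = some v ∧ v < u}.ncard

/-- The endomorphism of `V` determined on basis vectors by
`x · I_w = (−1)^{inv_w(x)} I_{x w x⁻¹}` if `dom(w) ⊆ dom(x)`, and `x · I_w = 0`
otherwise. -/
noncomputable def rhoIS (n : ℕ) (x : ISn n) : VIS n →ₗ[ℂ] VIS n :=
  Finsupp.lift (VIS n) ℂ (ISInv n) (fun w =>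
    if ∀ a : Fin n, (w.1 a).isSome → (x a).isSome then
      ((-1 : ℂ) ^ invIS w x) • Finsupp.single (conjIS x w) (1 : ℂ)
    else 0)

----------------- auxiliary lemmas -----------------

lemma trans_apply' {n : ℕ} (f g : ISn n) (a : Fin n) : (f.trans g) a = (f a).bind g := rfl

/-- the set of 2-cycles of the involution `w` -/
noncomputable def Pcyc {n : ℕ} (w : ISInv n) : Finset (Fin n × Fin n) :=
  Finset.univ.filter (fun p => p.1 < p.2 ∧ w.1 p.1 = some p.2)

def flips {n : ℕ} (x : ISn n) (p : Fin n × Fin n) : Prop :=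
  ∃ u v : Fin n, x p.1 = some u ∧ x p.2 = some v ∧ v < u

instance {n : ℕ} (x : ISn n) (p : Fin n × Fin n) : Decidable (flips x p) :=
  inferInstanceAs (Decidable (∃ u v : Fin n, x p.1 = some u ∧ x p.2 = some v ∧ v < u))

noncomputable def phiIS {n : ℕ} (y : ISn n) (p : Fin n × Fin n) : Fin n × Fin n :=
  let c := (y p.1).getD p.1
  let d := (y p.2).getD p.2
  if c < d then (c, d) else (d, c)

lemma invol_apply {n : ℕ} (w : ISInv n) {a b : Fin n} (h : w.1 a = some b) :
    w.1 b = some a := by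
  rw [← w.2]; exact (PEquiv.eq_some_iff w.1).2 h

lemma conj_apply_eq {n : ℕ} (y : ISn n) (w : ISInv n) {a b c d : Fin n}
    (hc : y a = some c) (hw : w.1 a = some b) (hd : y b = some d) :
    (conjIS y w).1 c = some d := by
  show ((y.symm.trans w.1).trans y) c = some d
  rw [PEquiv.trans_eq_some]
  exact ⟨b, (PEquiv.trans_eq_some _ _ _ _).2 ⟨a, (PEquiv.eq_some_iff y).2 hc, hw⟩, hd⟩

lemma conj_apply_exists {n : ℕ} (y : ISn n) (w : ISInv n) {c d : Fin n}
    (h : (conjIS y w).1 c = some d) :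
    ∃ a b, y.symm c = some a ∧ w.1 a = some b ∧ y b = some d := by
  have h' : ((y.symm.trans w.1).trans y) c = some d := h
  rw [PEquiv.trans_eq_some] at h'
  obtain ⟨b, hb, hd⟩ := h'
  rw [PEquiv.trans_eq_some] at hb
  obtain ⟨a, ha, hw⟩ := hb
  exact ⟨a, b, ha, hw, hd⟩

lemma invIS_eq_card {n : ℕ} (w : ISInv n) (x : ISn n) :
    invIS w x = ((Pcyc w).filter (fun p => flips x p)).card := by
  rw [invIS]
  have h : {p : Fin n × Fin n | p.1 < p.2 ∧ w.1 p.1 = some p.2 ∧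
      ∃ u v : Fin n, x p.1 = some u ∧ x p.2 = some v ∧ v < u}
        = ↑((Pcyc w).filter (fun p => flips x p)) := by
    ext p
    simp [Pcyc, flips, and_assoc]
  rw [h, Set.ncard_coe_finset]

lemma neg_one_pow_invIS {n : ℕ} (w : ISInv n) (x : ISn n) :
    ((-1 : ℂ) ^ invIS w x) = ∏ p ∈ Pcyc w, if flips x p then (-1 : ℂ) else 1 := by
  rw [invIS_eq_card, Finset.prod_ite, Finset.prod_const, Finset.prod_const, one_pow, mul_one]

lemma mem_Pcyc {n : ℕ} {w : ISInv n} {p : Fin n × Fin n} :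
    p ∈ Pcyc w ↔ p.1 < p.2 ∧ w.1 p.1 = some p.2 := by
  simp [Pcyc]

lemma conjIS_mul {n : ℕ} (x y : ISn n) (w : ISInv n) :
    conjIS (x * y) w = conjIS x (conjIS y w) := by
  apply Subtype.ext
  show ((y.trans x).symm.trans w.1).trans (y.trans x)
      = (x.symm.trans ((y.symm.trans w.1).trans y)).trans x
  simp only [PEquiv.symm_trans_rev, PEquiv.symm_symm, PEquiv.trans_assoc]

lemma dom_mul_iff {n : ℕ} (x y : ISn n) (w : ISInv n) :
    (∀ a, (w.1 a).isSome → ((x * y) a).isSome) ↔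
      ((∀ a, (w.1 a).isSome → (y a).isSome) ∧
        ∀ a, ((conjIS y w).1 a).isSome → (x a).isSome) := by
  simp only [ISn.mul_def]
  constructor
  · intro h
    refine ⟨fun a ha => ?_, fun c hc => ?_⟩
    · have := h a ha
      rw [trans_apply'] at this
      cases hya : y a with
      | none => rw [hya] at this; simp at this
      | some c => simp
    · rw [Option.isSome_iff_exists] at hc
      obtain ⟨d, hd⟩ := hc
      obtain ⟨a, b, ha, hw, hyb⟩ := conj_apply_exists y w hd
      have hya : y a = some c := (PEquiv.eq_some_iff y).1 ha
      have := h a (by rw [hw]; rfl)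
      rwa [trans_apply', hya, Option.bind_some] at this
  · rintro ⟨h1, h2⟩ a ha
    rw [Option.isSome_iff_exists] at ha
    obtain ⟨b, hw⟩ := ha
    have hwb : w.1 b = some a := invol_apply w hw
    have hya := h1 a (by rw [hw]; rfl)
    rw [Option.isSome_iff_exists] at hya
    obtain ⟨c, hya⟩ := hya
    have hyb := h1 b (by rw [hwb]; rfl)
    rw [Option.isSome_iff_exists] at hyb
    obtain ⟨d, hyb⟩ := hyb
    have hconj := conj_apply_eq y w hya hw hyb
    have hx := h2 c (by rw [hconj]; rfl)
    rw [trans_apply', hya, Option.bind_some]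
    exact hx


lemma Pcyc_data {n : ℕ} {w : ISInv n} {y : ISn n}
    (hy : ∀ a, (w.1 a).isSome → (y a).isSome)
    {p : Fin n × Fin n} (hp : p ∈ Pcyc w) :
    ∃ c d, y p.1 = some c ∧ y p.2 = some d ∧ c ≠ d ∧
      (conjIS y w).1 c = some d ∧ (conjIS y w).1 d = some c ∧
      phiIS y p = if c < d then (c, d) else (d, c) := by
  obtain ⟨hlt, hw⟩ := mem_Pcyc.1 hp
  have hw' : w.1 p.2 = some p.1 := invol_apply w hw
  have hc := hy p.1 (by rw [hw]; rfl)
  rw [Option.isSome_iff_exists] at hc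
  obtain ⟨c, hc⟩ := hc
  have hd := hy p.2 (by rw [hw']; rfl)
  rw [Option.isSome_iff_exists] at hd
  obtain ⟨d, hd⟩ := hd
  refine ⟨c, d, hc, hd, ?_, conj_apply_eq y w hc hw hd, conj_apply_eq y w hd hw' hc, ?_⟩
  · intro hcd
    subst hcd
    exact absurd (PEquiv.inj y hc hd) (ne_of_lt hlt)
  · simp [phiIS, hc, hd]

lemma phi_mem {n : ℕ} {w : ISInv n} {y : ISn n}
    (hy : ∀ a, (w.1 a).isSome → (y a).isSome)
    {p : Fin n × Fin n} (hp : p ∈ Pcyc w) : phiIS y p ∈ Pcyc (conjIS y w) := by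
  obtain ⟨c, d, hc, hd, hne, hcd, hdc, hphi⟩ := Pcyc_data hy hp
  rw [hphi]
  by_cases hlt : c < d
  · rw [if_pos hlt]; exact mem_Pcyc.2 ⟨hlt, hcd⟩
  · rw [if_neg hlt]
    exact mem_Pcyc.2 ⟨lt_of_le_of_ne (not_lt.1 hlt) hne.symm, hdc⟩

lemma Pcyc_conj_data {n : ℕ} {w : ISInv n} {y : ISn n}
    {q : Fin n × Fin n} (hq : q ∈ Pcyc (conjIS y w)) :
    ∃ a b, y.symm q.1 = some a ∧ y.symm q.2 = some b ∧ a ≠ b ∧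
      y a = some q.1 ∧ y b = some q.2 ∧ w.1 a = some b ∧ w.1 b = some a ∧
      phiIS y.symm q = if a < b then (a, b) else (b, a) := by
  obtain ⟨hlt, hw'⟩ := mem_Pcyc.1 hq
  obtain ⟨a, b, ha, hw, hyb⟩ := conj_apply_exists y w hw'
  have hya : y a = some q.1 := (PEquiv.eq_some_iff y).1 ha
  have hb : y.symm q.2 = some b := (PEquiv.eq_some_iff y).2 hyb
  have hne : a ≠ b := by
    intro hab; subst hab
    rw [hya] at hyb
    exact absurd (Option.some_injective _ hyb) (ne_of_lt hlt)
  exact ⟨a, b, ha, hb, hne, hya, hyb, hw, invol_apply w hw, by simp [phiIS, ha, hb]⟩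

lemma psi_mem {n : ℕ} {w : ISInv n} {y : ISn n}
    {q : Fin n × Fin n} (hq : q ∈ Pcyc (conjIS y w)) : phiIS y.symm q ∈ Pcyc w := by
  obtain ⟨a, b, _, _, hne, _, _, hw, hw', hphi⟩ := Pcyc_conj_data hq
  rw [hphi]
  by_cases hlt : a < b
  · rw [if_pos hlt]; exact mem_Pcyc.2 ⟨hlt, hw⟩
  · rw [if_neg hlt]
    exact mem_Pcyc.2 ⟨lt_of_le_of_ne (not_lt.1 hlt) hne.symm, hw'⟩

lemma psi_phi {n : ℕ} {w : ISInv n} {y : ISn n}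
    (hy : ∀ a, (w.1 a).isSome → (y a).isSome)
    {p : Fin n × Fin n} (hp : p ∈ Pcyc w) : phiIS y.symm (phiIS y p) = p := by
  obtain ⟨hlt, _⟩ := mem_Pcyc.1 hp
  obtain ⟨c, d, hc, hd, hne, _, _, hphi⟩ := Pcyc_data hy hp
  have h1 : y.symm c = some p.1 := (PEquiv.eq_some_iff y).2 hc
  have h2 : y.symm d = some p.2 := (PEquiv.eq_some_iff y).2 hd
  rw [hphi]
  by_cases hcd : c < d
  · rw [if_pos hcd]
    simp [phiIS, h1, h2, hlt]
  · rw [if_neg hcd]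
    simp [phiIS, h1, h2, hlt, not_lt_of_gt hlt]

lemma phi_psi {n : ℕ} {w : ISInv n} {y : ISn n}
    {q : Fin n × Fin n} (hq : q ∈ Pcyc (conjIS y w)) : phiIS y (phiIS y.symm q) = q := by
  obtain ⟨hlt, _⟩ := mem_Pcyc.1 hq
  obtain ⟨a, b, _, _, hne, hya, hyb, _, _, hphi⟩ := Pcyc_conj_data hq
  rw [hphi]
  by_cases hab : a < b
  · rw [if_pos hab]
    simp [phiIS, hya, hyb, hlt]
  · rw [if_neg hab]
    simp [phiIS, hya, hyb, hlt, not_lt_of_gt hlt]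

lemma flips_mul {n : ℕ} (x y : ISn n) (w : ISInv n)
    (hy : ∀ a, (w.1 a).isSome → (y a).isSome)
    (hx : ∀ a, ((conjIS y w).1 a).isSome → (x a).isSome)
    {p : Fin n × Fin n} (hp : p ∈ Pcyc w) :
    (if flips (x * y) p then (-1 : ℂ) else 1) =
      (if flips y p then (-1 : ℂ) else 1) * (if flips x (phiIS y p) then (-1 : ℂ) else 1) := by
  obtain ⟨c, d, hc, hd, hne, hcd, hdc, hphi⟩ := Pcyc_data hy hp
  have hu := hx c (by rw [hcd]; rfl)
  rw [Option.isSome_iff_exists] at hu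
  obtain ⟨u, hu⟩ := hu
  have hv := hx d (by rw [hdc]; rfl)
  rw [Option.isSome_iff_exists] at hv
  obtain ⟨v, hv⟩ := hv
  have huv : u ≠ v := by
    intro h; subst h
    exact hne (PEquiv.inj x hu hv)
  have hxy : flips (x * y) p ↔ v < u := by
    simp [flips, ISn.mul_def, trans_apply', hc, hd, hu, hv]
  have hfy : flips y p ↔ d < c := by simp [flips, hc, hd]
  rw [hphi]
  by_cases hlt : c < d
  · rw [if_pos hlt]
    have hfx : flips x (c, d) ↔ v < u := by simp [flips, hu, hv]
    simp only [hxy, hfy, hfx]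
    rw [if_neg (not_lt_of_gt hlt), one_mul]
  · rw [if_neg hlt]
    have hdc' : d < c := lt_of_le_of_ne (not_lt.1 hlt) hne.symm
    have hfx : flips x (d, c) ↔ u < v := by simp [flips, hu, hv]
    simp only [hxy, hfy, hfx, if_pos hdc']
    rcases lt_trichotomy u v with h | h | h
    · rw [if_neg (not_lt_of_gt h), if_pos h]; ring
    · exact absurd h huv
    · rw [if_pos h, if_neg (not_lt_of_gt h)]; ring

lemma signIS_mul {n : ℕ} (x y : ISn n) (w : ISInv n)
    (hy : ∀ a, (w.1 a).isSome → (y a).isSome)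
    (hx : ∀ a, ((conjIS y w).1 a).isSome → (x a).isSome) :
    ((-1 : ℂ) ^ invIS w (x * y)) =
      ((-1 : ℂ) ^ invIS w y) * ((-1 : ℂ) ^ invIS (conjIS y w) x) := by
  rw [neg_one_pow_invIS, neg_one_pow_invIS, neg_one_pow_invIS]
  have hre : (∏ q ∈ Pcyc (conjIS y w), if flips x q then (-1 : ℂ) else 1) =
      ∏ p ∈ Pcyc w, if flips x (phiIS y p) then (-1 : ℂ) else 1 := by
    refine Finset.prod_nbij' (phiIS y.symm) (phiIS y) (fun q hq => psi_mem hq)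
      (fun p hp => phi_mem hy hp) (fun q hq => phi_psi hq) (fun p hp => psi_phi hy hp)
      (fun q hq => ?_)
    rw [phi_psi hq]
  rw [hre, ← Finset.prod_mul_distrib]
  exact Finset.prod_congr rfl fun p hp => flips_mul x y w hy hx hp

lemma rhoIS_single {n : ℕ} (x : ISn n) (w : ISInv n) (c : ℂ) :
    rhoIS n x (Finsupp.single w c) =
      c • (if ∀ a : Fin n, (w.1 a).isSome → (x a).isSome then
        ((-1 : ℂ) ^ invIS w x) • Finsupp.single (conjIS x w) (1 : ℂ) else 0) := by
  rw [rhoIS]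
  simp [Finsupp.lift_apply, Finsupp.sum_single_index]


/-- The assignment `x ↦ ρ(x)` is a monoid homomorphism from `ISₙ` to the multiplicative
monoid of `End_ℂ(V)`: the identity of `ISₙ` acts as the identity of `V`, and
`(xy) · I_w = x · (y · I_w)` for all `x, y ∈ ISₙ` and all involutions `w`. -/
theorem rhoIS_isMonoidHom (n : ℕ) (hn : 1 ≤ n) :
    rhoIS n 1 = LinearMap.id ∧
      ∀ (x y : ISn n) (w : ISInv n),
        rhoIS n (x * y) (Finsupp.single w (1 : ℂ)) =
          rhoIS n x (rhoIS n y (Finsupp.single w (1 : ℂ))) := by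
  constructor
  · apply Finsupp.lhom_ext
    intro w c
    rw [rhoIS_single]
    have hdom : ∀ a : Fin n, (w.1 a).isSome → (((1 : ISn n)) a).isSome := by
      intro a _
      simp [ISn.one_def, PEquiv.refl_apply]
    rw [if_pos hdom]
    have hinv : invIS w (1 : ISn n) = 0 := by
      rw [invIS]
      have h0 : {p : Fin n × Fin n | p.1 < p.2 ∧ w.1 p.1 = some p.2 ∧
          ∃ u v : Fin n, (1 : ISn n) p.1 = some u ∧ (1 : ISn n) p.2 = some v ∧ v < u} = ∅ := by
        ext p
        simp only [ISn.one_def, PEquiv.refl_apply, Set.mem_setOf_eq, Set.mem_empty_iff_false,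
          iff_false, not_and]
        rintro h1 _ ⟨u, v, hu, hv, hvu⟩
        rw [Option.some_injective _ hu.symm, Option.some_injective _ hv.symm] at hvu
        exact absurd h1 (not_lt_of_gt hvu)
      rw [h0, Set.ncard_empty]
    have hconj : conjIS (1 : ISn n) w = w := by
      apply Subtype.ext
      show ((PEquiv.refl (Fin n)).symm.trans w.1).trans (PEquiv.refl (Fin n)) = w.1
      rw [PEquiv.symm_refl, PEquiv.refl_trans, PEquiv.trans_refl]
    rw [hinv, hconj, pow_zero, one_smul, LinearMap.id_apply, Finsupp.smul_single, smul_eq_mul,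
      mul_one]
  · intro x y w
    by_cases h : ∀ a : Fin n, (w.1 a).isSome → ((x * y) a).isSome
    · obtain ⟨h1, h2⟩ := (dom_mul_iff x y w).1 h
      rw [rhoIS_single, if_pos h, one_smul, rhoIS_single, if_pos h1, one_smul, map_smul,
        rhoIS_single, if_pos h2, one_smul, conjIS_mul, signIS_mul x y w h1 h2, smul_smul]
    · have hno : ¬ ((∀ a, (w.1 a).isSome → (y a).isSome) ∧
          ∀ a, ((conjIS y w).1 a).isSome → (x a).isSome) := fun hc => h ((dom_mul_iff x y w).2 hc)
      rw [rhoIS_single, if_neg h, smul_zero]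
      by_cases h1 : ∀ a : Fin n, (w.1 a).isSome → (y a).isSome
      · have h2 : ¬ ∀ a, ((conjIS y w).1 a).isSome → (x a).isSome := fun h2 => hno ⟨h1, h2⟩
        rw [rhoIS_single, if_pos h1, one_smul, map_smul, rhoIS_single, if_neg h2, smul_zero,
          smul_zero]
      · rw [rhoIS_single, if_neg h1, smul_zero, map_zero]
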